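/- Let X ⊆ ℝ² be compact, let a > 0, let R : ℝ² → ℝ² be a rotation (linear isometry), and let c ∈ ℝ². Let C₀ = {(0,0),(1,0),(0,1),(1,1)} and for z ∈ ℤ² let P(z) = {aR(z + c + q) : q ∈ C₀} be the vertex set of the lattice cell indexed by z. Then the set Z = {z ∈ ℤ² : P(z) ∩ X ≠ ∅ and P(z) ⊄ X} is finite, and a² · card(Z) ≤ V₂(frontier(X) ⊕ closedBall(0, √2·a)), where V₂ is Lebesgue measure on ℝ² and ⊕ denotes Minkowski sum. -/

import Mathlib

open Pointwise MeasureTheory Metric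

noncomputable section

/-- The plane `ℝ²`. -/
abbrev E2 := EuclideanSpace ℝ (Fin 2)

/-- The point `(x, y)` of `ℝ²`. -/
def pt (x y : ℝ) : E2 := (WithLp.equiv 2 (Fin 2 → ℝ)).symm ![x, y]

/-- The embedding of `ℤ²` into `ℝ²`. -/
def latticePt (z : ℤ × ℤ) : E2 := pt (z.1 : ℝ) (z.2 : ℝ)

/-- The vertex set of the unit lattice square. -/
def C0 : Set E2 := {pt 0 0, pt 1 0, pt 0 1, pt 1 1}

/-- Vertex set of the `2×2` lattice cell indexed by `z ∈ ℤ²` in the lattice `aR(ℤ² + c)`. -/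
def cellVerts (a : ℝ) (R : E2 ≃ₗᵢ[ℝ] E2) (c : E2) (z : ℤ × ℤ) : Set E2 :=
  (fun q => a • R (latticePt z + c + q)) '' C0

/-! ### Auxiliary material -/

/-- The half-open unit box `[0,1)²`. -/
def hoBox : Set E2 := (MeasurableEquiv.toLp 2 (Fin 2 → ℝ)).symm ⁻¹' (Set.univ.pi fun _ => Set.Ico 0 1)

lemma mem_hoBox {x : E2} : x ∈ hoBox ↔ ∀ i, 0 ≤ x i ∧ x i < 1 := by
  simp [hoBox, Set.mem_pi]

lemma measurableSet_hoBox : MeasurableSet hoBox :=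
  (MeasurableSet.univ_pi fun _ => measurableSet_Ico).preimage (MeasurableEquiv.measurable _)

lemma volume_hoBox : volume hoBox = 1 := by
  rw [hoBox, (EuclideanSpace.volume_preserving_symm_measurableEquiv_toLp (Fin 2)).measure_preimage
    (MeasurableSet.univ_pi fun _ => measurableSet_Ico).nullMeasurableSet]
  simp [volume_pi_pi]

/-- The inverse affine chart of the cell indexed by `z`. -/
def gmap (a : ℝ) (R : E2 ≃ₗᵢ[ℝ] E2) (c : E2) (z : ℤ × ℤ) (m : E2) : E2 :=
  R.symm (a⁻¹ • m) - (latticePt z + c)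

/-- The half-open cell indexed by `z`. -/
def cellHO (a : ℝ) (R : E2 ≃ₗᵢ[ℝ] E2) (c : E2) (z : ℤ × ℤ) : Set E2 :=
  gmap a R c z ⁻¹' hoBox

lemma measurableSet_cellHO (a : ℝ) (R : E2 ≃ₗᵢ[ℝ] E2) (c : E2) (z : ℤ × ℤ) :
    MeasurableSet (cellHO a R c z) := by
  apply measurableSet_hoBox.preimage
  have : Continuous (gmap a R c z) := by
    unfold gmap
    fun_prop
  exact this.measurable

lemma volume_cellHO {a : ℝ} (ha : 0 < a) (R : E2 ≃ₗᵢ[ℝ] E2) (c : E2) (z : ℤ × ℤ) :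
    volume (cellHO a R c z) = ENNReal.ofReal (a ^ 2) := by
  have h1 : cellHO a R c z
      = (a⁻¹ • ·) ⁻¹' (⇑R.symm ⁻¹' ((fun y => y - (latticePt z + c)) ⁻¹' hoBox)) := rfl
  have hmb : MeasurableSet ((fun y => y - (latticePt z + c)) ⁻¹' hoBox) :=
    measurableSet_hoBox.preimage (measurable_id.sub_const _)
  rw [h1, MeasureTheory.Measure.addHaar_preimage_smul volume (inv_ne_zero ha.ne') _,
    (R.symm.measurePreserving).measure_preimage hmb.nullMeasurableSet]
  have h2 : volume ((fun y => y - (latticePt z + c)) ⁻¹' hoBox) = volume hoBox := by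
    simp [sub_eq_add_neg, measure_preimage_add_right]
  rw [h2, volume_hoBox, mul_one]
  congr 1
  rw [finrank_euclideanSpace_fin]
  rw [abs_of_nonneg (by positivity)]
  field_simp

lemma gmap_eq {a : ℝ} (ha : a ≠ 0) (R : E2 ≃ₗᵢ[ℝ] E2) (c : E2) (z : ℤ × ℤ) {m x : E2}
    (h : gmap a R c z m = x) : m = a • R (latticePt z + c + x) := by
  have h1 : R.symm (a⁻¹ • m) = latticePt z + c + x := by
    have := sub_eq_iff_eq_add.mp h
    rw [this]; abel
  have h2 : a⁻¹ • m = R (latticePt z + c + x) := by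
    rw [← h1]; simp
  calc m = a • (a⁻¹ • m) := by rw [smul_inv_smul₀ ha]
    _ = a • R (latticePt z + c + x) := by rw [h2]

lemma C0_coord {q : E2} (hq : q ∈ C0) (i : Fin 2) : q i = 0 ∨ q i = 1 := by
  rcases hq with h | h | h | h <;> subst h <;> fin_cases i <;> simp [pt]

/-- Coordinates of lattice points. -/
lemma latticePt_apply (z : ℤ × ℤ) :
    latticePt z 0 = (z.1 : ℝ) ∧ latticePt z 1 = (z.2 : ℝ) := ⟨rfl, rfl⟩

/-- Cells indexed by distinct `z` are disjoint. -/
lemma cellHO_disjoint {a : ℝ} (ha : 0 < a) (R : E2 ≃ₗᵢ[ℝ] E2) (c : E2) {z z' : ℤ × ℤ}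
    (hzz : z ≠ z') : Disjoint (cellHO a R c z) (cellHO a R c z') := by
  rw [Set.disjoint_left]
  intro m hm hm'
  rw [cellHO, Set.mem_preimage, mem_hoBox] at hm hm'
  have key : ∀ i : Fin 2, gmap a R c z m i - gmap a R c z' m i
      = latticePt z' i - latticePt z i := by
    intro i
    unfold gmap
    simp only [PiLp.sub_apply, PiLp.add_apply]
    ring
  apply hzz
  have h0 := key 0
  have h1 := key 1
  have hb0 := hm 0; have hb0' := hm' 0
  have hb1 := hm 1; have hb1' := hm' 1
  have e0 : ((z'.1 - z.1 : ℤ) : ℝ) = gmap a R c z m 0 - gmap a R c z' m 0 := by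
    rw [h0, (latticePt_apply z).1, (latticePt_apply z').1]; push_cast; ring
  have e1 : ((z'.2 - z.2 : ℤ) : ℝ) = gmap a R c z m 1 - gmap a R c z' m 1 := by
    rw [h1, (latticePt_apply z).2, (latticePt_apply z').2]; push_cast; ring
  have a0 : |((z'.1 - z.1 : ℤ) : ℝ)| < 1 := by rw [e0]; rw [abs_lt]; constructor <;> linarith
  have a1 : |((z'.2 - z.2 : ℤ) : ℝ)| < 1 := by rw [e1]; rw [abs_lt]; constructor <;> linarith
  rw [← Int.cast_abs] at a0 a1
  have b0 : z'.1 - z.1 = 0 := Int.abs_lt_one_iff.mp (by exact_mod_cast a0)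
  have b1 : z'.2 - z.2 = 0 := Int.abs_lt_one_iff.mp (by exact_mod_cast a1)
  exact Prod.ext (by omega) (by omega)

/-- A mixed cell's half-open square is contained in the tube around the frontier. -/
lemma cellHO_subset_tube {X : Set E2} (hX : IsCompact X) {a : ℝ} (ha : 0 < a)
    (R : E2 ≃ₗᵢ[ℝ] E2) (c : E2) {z : ℤ × ℤ}
    (hz : (cellVerts a R c z ∩ X).Nonempty ∧ ¬ cellVerts a R c z ⊆ X) :
    cellHO a R c z ⊆ frontier X + closedBall (0 : E2) (Real.sqrt 2 * a) := by
  obtain ⟨⟨v, hvC, hvX⟩, hns⟩ := hz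
  rw [Set.not_subset] at hns
  obtain ⟨u, huC, huX⟩ := hns
  obtain ⟨q1, hq1, rfl⟩ := hvC
  obtain ⟨q2, hq2, rfl⟩ := huC
  set w := latticePt z + c with hw
  set v := a • R (w + q1) with hv
  set u := a • R (w + q2) with hu
  -- find a frontier point on the segment from v to u
  have hXcl : IsClosed X := hX.isClosed
  have hfr : (segment ℝ v u ∩ frontier X).Nonempty := by
    by_contra hemp
    rw [Set.not_nonempty_iff_eq_empty] at hemp
    have hdis : ∀ y ∈ segment ℝ v u, y ∉ frontier X := by
      intro y hy hyf
      exact Set.eq_empty_iff_forall_notMem.mp hemp y ⟨hy, hyf⟩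
    have hconn : IsPreconnected (segment ℝ v u) := (convex_segment v u).isPreconnected
    have hcover : segment ℝ v u ⊆ interior X ∪ Xᶜ := by
      intro y hy
      by_cases hyX : y ∈ X
      · left
        have : y ∈ closure X := subset_closure hyX
        by_contra hyint
        exact hdis y hy ⟨this, hyint⟩
      · right; exact hyX
    have hne1 : (segment ℝ v u ∩ interior X).Nonempty := by
      refine ⟨v, left_mem_segment ℝ v u, ?_⟩
      have : v ∈ closure X := subset_closure hvX
      by_contra hvint
      exact hdis v (left_mem_segment ℝ v u) ⟨this, hvint⟩
    have hne2 : (segment ℝ v u ∩ Xᶜ).Nonempty := ⟨u, right_mem_segment ℝ v u, huX⟩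
    obtain ⟨y, _, hyint, hyc⟩ :=
      hconn (interior X) Xᶜ isOpen_interior hXcl.isOpen_compl hcover hne1 hne2
    exact hyc (interior_subset hyint)
  obtain ⟨p, hpseg, hpfr⟩ := hfr
  obtain ⟨α, β, hα, hβ, hαβ, hp⟩ := hpseg
  set y : E2 := α • q1 + β • q2 with hy
  have hpform : p = a • R (w + y) := by
    rw [← hp, hv, hu]
    have l1 : α • (a • R (w + q1)) = a • R (α • (w + q1)) := by
      rw [smul_comm, ← R.map_smul]
    have l2 : β • (a • R (w + q2)) = a • R (β • (w + q2)) := by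
      rw [smul_comm, ← R.map_smul]
    have hcomb : α • (w + q1) + β • (w + q2) = w + y := by
      have h : α • (w + q1) + β • (w + q2) = (α + β) • w + (α • q1 + β • q2) := by module
      rw [h, hαβ, one_smul, hy]
    rw [l1, l2, ← smul_add, ← map_add, hcomb]
  have hycoord : ∀ i : Fin 2, 0 ≤ y i ∧ y i ≤ 1 := by
    intro i
    have hq1i := C0_coord hq1 i
    have hq2i := C0_coord hq2 i
    have hb1 : 0 ≤ q1 i ∧ q1 i ≤ 1 := by
      rcases hq1i with h | h <;> rw [h] <;> norm_num
    have hb2 : 0 ≤ q2 i ∧ q2 i ≤ 1 := by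
      rcases hq2i with h | h <;> rw [h] <;> norm_num
    have hyi : y i = α * q1 i + β * q2 i := by simp [hy]
    rw [hyi]
    obtain ⟨c1, d1⟩ := hb1
    obtain ⟨c2, d2⟩ := hb2
    constructor <;> nlinarith
  -- now the containment
  intro m hm
  rw [cellHO, Set.mem_preimage] at hm
  set x : E2 := gmap a R c z m with hx
  have hxbox : ∀ i, 0 ≤ x i ∧ x i < 1 := mem_hoBox.mp hm
  have hmform : m = a • R (w + x) := gmap_eq ha.ne' R c z hx.symm
  have hdist : ‖m - p‖ ≤ Real.sqrt 2 * a := by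
    have hsub : m - p = a • R (x - y) := by
      rw [hmform, hpform, ← smul_sub, ← map_sub]
      congr 1
      abel
    rw [hsub]
    have hnorm : ‖a • R (x - y)‖ = a * ‖x - y‖ := by
      rw [norm_smul, R.norm_map, Real.norm_eq_abs, abs_of_pos ha]
    rw [hnorm]
    have hxy : ‖x - y‖ ≤ Real.sqrt 2 := by
      rw [EuclideanSpace.norm_eq]
      have hbound : ∀ i : Fin 2, ‖(x - y) i‖ ^ 2 ≤ 1 := by
        intro i
        have h1 := hxbox i
        have h2 := hycoord i
        have : (x - y) i = x i - y i := by simp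
        rw [this, Real.norm_eq_abs, sq_abs]
        nlinarith
      apply Real.sqrt_le_sqrt
      rw [Fin.sum_univ_two]
      have := hbound 0; have := hbound 1
      linarith
    calc a * ‖x - y‖ ≤ a * Real.sqrt 2 := by
          exact mul_le_mul_of_nonneg_left hxy ha.le
      _ = Real.sqrt 2 * a := mul_comm _ _
  have hmem : m - p ∈ closedBall (0 : E2) (Real.sqrt 2 * a) := by
    rw [mem_closedBall_zero_iff]; exact hdist
  have : m = p + (m - p) := by abel
  rw [this]
  exact Set.add_mem_add hpfr hmem

/-- The tube has finite volume. -/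
lemma tube_volume_lt_top {X : Set E2} (hX : IsCompact X) {a : ℝ} (ha : 0 < a) :
    volume (frontier X + closedBall (0 : E2) (Real.sqrt 2 * a)) < ⊤ := by
  apply Bornology.IsBounded.measure_lt_top
  exact (hX.isBounded.subset hX.isClosed.frontier_subset).add isBounded_closedBall

/-- The key counting estimate for finite families of mixed cells. -/
lemma finset_bound {X : Set E2} (hX : IsCompact X) {a : ℝ} (ha : 0 < a)
    (R : E2 ≃ₗᵢ[ℝ] E2) (c : E2) (F : Finset (ℤ × ℤ))
    (hF : ∀ z ∈ F, (cellVerts a R c z ∩ X).Nonempty ∧ ¬ cellVerts a R c z ⊆ X) :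
    (F.card : ℝ) * a ^ 2 ≤
      (volume (frontier X + closedBall (0 : E2) (Real.sqrt 2 * a))).toReal := by
  set tube := frontier X + closedBall (0 : E2) (Real.sqrt 2 * a) with htube
  have hsub : (⋃ z ∈ F, cellHO a R c z) ⊆ tube := by
    intro m hm
    rw [Set.mem_iUnion₂] at hm
    obtain ⟨z, hzF, hmz⟩ := hm
    exact cellHO_subset_tube hX ha R c (hF z hzF) hmz
  have hdisj : (F : Set (ℤ × ℤ)).PairwiseDisjoint (cellHO a R c) := by
    intro z _ z' _ hzz
    exact cellHO_disjoint ha R c hzz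
  have hvol : volume (⋃ z ∈ F, cellHO a R c z) = F.card * ENNReal.ofReal (a ^ 2) := by
    rw [measure_biUnion_finset hdisj (fun z _ => measurableSet_cellHO a R c z)]
    simp [volume_cellHO ha R c, mul_comm]
  have hle : (F.card : ENNReal) * ENNReal.ofReal (a ^ 2) ≤ volume tube := by
    rw [← hvol]
    exact measure_mono hsub
  have hfin : volume tube ≠ ⊤ := (tube_volume_lt_top hX ha).ne
  have := ENNReal.toReal_mono hfin hle
  rwa [ENNReal.toReal_mul, ENNReal.toReal_natCast,
    ENNReal.toReal_ofReal (by positivity)] at this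

/-- The counting bound behind Lemma 2 of the paper: the set of lattice cells whose vertex
configuration is of a mixed type (meeting both `X` and its complement) is finite, and its
cardinality times `a²` is bounded by the area of the `√2·a`-tube around `∂X`. -/
theorem stmt_13 (X : Set E2) (hX : IsCompact X) (a : ℝ) (ha : 0 < a)
    (R : E2 ≃ₗᵢ[ℝ] E2) (c : E2) :
    {z : ℤ × ℤ | (cellVerts a R c z ∩ X).Nonempty ∧ ¬ cellVerts a R c z ⊆ X}.Finite ∧
      a ^ 2 * ({z : ℤ × ℤ | (cellVerts a R c z ∩ X).Nonempty ∧
            ¬ cellVerts a R c z ⊆ X}.ncard : ℝ) ≤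
        (volume (frontier X + closedBall (0 : E2) (Real.sqrt 2 * a))).toReal := by
  set Z := {z : ℤ × ℤ | (cellVerts a R c z ∩ X).Nonempty ∧ ¬ cellVerts a R c z ⊆ X} with hZ
  set T := (volume (frontier X + closedBall (0 : E2) (Real.sqrt 2 * a))).toReal with hT
  have hfin : Z.Finite := by
    by_contra hinf
    replace hinf : Z.Infinite := hinf
    set n := ⌈T / a ^ 2⌉₊ + 1 with hn
    obtain ⟨F, hFsub, hFcard⟩ := hinf.exists_subset_card_eq n
    have hbound := finset_bound hX ha R c F (fun z hz => hFsub hz)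
    rw [hFcard] at hbound
    have h1 : (T / a ^ 2) ≤ (⌈T / a ^ 2⌉₊ : ℝ) := Nat.le_ceil _
    have h2 : ((n : ℕ) : ℝ) = (⌈T / a ^ 2⌉₊ : ℝ) + 1 := by push_cast [hn]; ring
    have ha2 : (0 : ℝ) < a ^ 2 := by positivity
    rw [h2] at hbound
    have : T / a ^ 2 * a ^ 2 = T := div_mul_cancel₀ T ha2.ne'
    nlinarith
  refine ⟨hfin, ?_⟩
  have hbound := finset_bound hX ha R c hfin.toFinset (fun z hz => hfin.mem_toFinset.mp hz)
  rw [Set.ncard_eq_toFinset_card Z hfin]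
  linarith [hbound]

end
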